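/- arXiv:2209.13845 — 2 statements merged into one kernel-verified Lean document; each statement's English description precedes it below -/
import Mathlib

section
/- Let g : Ω → ℂ^L, z̃ : Ω → ℂ^N and H̃ : Ω → ℂ^{N×L} be mutually independent random objects on a probability space, each with square-integrable entries and entrywise zero mean, and set R_g = E[g g^H] ∈ ℂ^{L×L}, R_z = E[z̃ z̃^H] ∈ ℂ^{N×N}, and Σ_{l,l'} = E[h_l h_{l'}^H] ∈ ℂ^{N×N} for 1 ≤ l, l' ≤ L, where h_l denotes the l-th column of H̃. Let H̄ ∈ ℂ^{N×L}, z̄ ∈ ℂ^N, Φ ∈ ℂ^{N×N} be deterministic and θ ∈ ℝ. Define the random vector õ = g + H̄^H Φ z̃ + H̃^H Φ z̄ exp(jθ) + H̃^H Φ z̃ ∈ ℂ^L. Then E[õ õ^H] = R_g + H̄^H Φ R_z Φ^H H̄ + Q¹ + Q², where Q¹, Q² ∈ ℂ^{L×L} have entries [Q¹]_{l,l'} = tr(Φ z̄ z̄^H Φ^H Σ_{l',l}) and [Q²]_{l,l'} = tr(Φ R_z Φ^H Σ_{l',l}). -/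
open MeasureTheory ProbabilityTheory Matrix

/-- Entrywise expectation of a random matrix. -/
noncomputable def matExp {Ω : Type*} [MeasureSpace Ω] {m n : Type*}
    (X : Ω → Matrix m n ℂ) : Matrix m n ℂ :=
  Matrix.of fun i j => ∫ ω, X ω i j

/-- Outer product `x yᴴ`. -/
def outer {m n : Type*} (x : m → ℂ) (y : n → ℂ) : Matrix m n ℂ :=
  Matrix.of fun i j => x i * star (y j)

noncomputable instance {m n : Type*} : MeasurableSpace (Matrix m n ℂ) :=
  inferInstanceAs (MeasurableSpace (m → n → ℂ))

section Aux
variable {Ω : Type*} {mΩ : MeasurableSpace Ω} {μ : Measure Ω}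

lemma memLp_star {f : Ω → ℂ} {p : ENNReal} (hf : MemLp f p μ) :
    MemLp (fun ω => star (f ω)) p μ := by
  refine MemLp.of_le hf (Complex.continuous_conj.comp_aestronglyMeasurable hf.1) ?_
  filter_upwards with ω
  simp [RCLike.norm_conj]

lemma integral_star' (f : Ω → ℂ) : ∫ ω, star (f ω) ∂μ = star (∫ ω, f ω ∂μ) := by
  simpa only [starRingEnd_apply] using (integral_conj (f := f) (μ := μ))

lemma L2_mul_integrable [IsFiniteMeasure μ] {f h : Ω → ℂ}
    (hf : MemLp f 2 μ) (hh : MemLp h 2 μ) :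
    Integrable (fun ω => f ω * h ω) μ := by
  have h1 : (1 : ENNReal) / 1 = 1 / 2 + 1 / 2 := by
    simp [one_div, ENNReal.inv_two_add_inv_two]
  haveI : ENNReal.HolderTriple 2 2 1 := ⟨by rw [inv_one, ENNReal.inv_two_add_inv_two]⟩
  have := (hh.smul hf : MemLp (f • h) 1 μ)
  rw [memLp_one_iff_integrable] at this
  exact this

lemma indep_integral_mul_complex [IsProbabilityMeasure μ] {X Y : Ω → ℂ}
    (h : IndepFun X Y μ) (hX : Integrable X μ) (hY : Integrable Y μ) :
    ∫ ω, X ω * Y ω ∂μ = (∫ ω, X ω ∂μ) * ∫ ω, Y ω ∂μ := by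
  have hXY : Integrable (X * Y) μ := h.integrable_mul hX hY
  have hiac : IndepFun (fun ω => (X ω).re) (fun ω => (Y ω).re) μ :=
    h.comp Complex.measurable_re Complex.measurable_re
  have hiad : IndepFun (fun ω => (X ω).re) (fun ω => (Y ω).im) μ :=
    h.comp Complex.measurable_re Complex.measurable_im
  have hibc : IndepFun (fun ω => (X ω).im) (fun ω => (Y ω).re) μ :=
    h.comp Complex.measurable_im Complex.measurable_re
  have hibd : IndepFun (fun ω => (X ω).im) (fun ω => (Y ω).im) μ :=
    h.comp Complex.measurable_im Complex.measurable_im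
  have hXre : Integrable (fun ω => (X ω).re) μ := hX.re
  have hXim : Integrable (fun ω => (X ω).im) μ := hX.im
  have hYre : Integrable (fun ω => (Y ω).re) μ := hY.re
  have hYim : Integrable (fun ω => (Y ω).im) μ := hY.im
  have iac : Integrable (fun ω => (X ω).re * (Y ω).re) μ := hiac.integrable_mul hXre hYre
  have iad : Integrable (fun ω => (X ω).re * (Y ω).im) μ := hiad.integrable_mul hXre hYim
  have ibc : Integrable (fun ω => (X ω).im * (Y ω).re) μ := hibc.integrable_mul hXim hYre
  have ibd : Integrable (fun ω => (X ω).im * (Y ω).im) μ := hibd.integrable_mul hXim hYim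
  have eac : ∫ ω, (X ω).re * (Y ω).re ∂μ = (∫ ω, (X ω).re ∂μ) * ∫ ω, (Y ω).re ∂μ :=
    hiac.integral_fun_mul_eq_mul_integral hXre.1 hYre.1
  have ead : ∫ ω, (X ω).re * (Y ω).im ∂μ = (∫ ω, (X ω).re ∂μ) * ∫ ω, (Y ω).im ∂μ :=
    hiad.integral_fun_mul_eq_mul_integral hXre.1 hYim.1
  have ebc : ∫ ω, (X ω).im * (Y ω).re ∂μ = (∫ ω, (X ω).im ∂μ) * ∫ ω, (Y ω).re ∂μ :=
    hibc.integral_fun_mul_eq_mul_integral hXim.1 hYre.1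
  have ebd : ∫ ω, (X ω).im * (Y ω).im ∂μ = (∫ ω, (X ω).im ∂μ) * ∫ ω, (Y ω).im ∂μ :=
    hibd.integral_fun_mul_eq_mul_integral hXim.1 hYim.1
  have hre := Complex.reCLM.integral_comp_comm hXY
  have him := Complex.imCLM.integral_comp_comm hXY
  have hXr := Complex.reCLM.integral_comp_comm hX
  have hXi := Complex.imCLM.integral_comp_comm hX
  have hYr := Complex.reCLM.integral_comp_comm hY
  have hYi := Complex.imCLM.integral_comp_comm hY
  simp only [Complex.reCLM_apply, Complex.imCLM_apply, Pi.mul_apply] at hre him hXr hXi hYr hYi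
  apply Complex.ext
  · rw [← hre, Complex.mul_re, ← hXr, ← hXi, ← hYr, ← hYi, ← eac, ← ebd]
    simp only [Complex.mul_re]
    exact integral_sub iac ibd
  · rw [← him, Complex.mul_im, ← hXr, ← hXi, ← hYr, ← hYi, ← ead, ← ebc]
    simp only [Complex.mul_im]
    exact integral_add iad ibc

lemma integral_mul_conj_sum4 (f f' : Fin 4 → Ω → ℂ)
    (hint : ∀ i j, Integrable (fun ω => f i ω * star (f' j ω)) μ) :
    ∫ ω, (∑ i, f i ω) * star (∑ j, f' j ω) ∂μ
      = ∑ i, ∑ j, ∫ ω, f i ω * star (f' j ω) ∂μ := by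
  have h1 : ∀ ω, (∑ i, f i ω) * star (∑ j, f' j ω)
      = ∑ i, ∑ j, f i ω * star (f' j ω) := by
    intro ω
    rw [star_sum, Finset.sum_mul_sum]
  rw [integral_congr_ae (Filter.Eventually.of_forall h1),
    integral_finset_sum _ (fun i _ => integrable_finset_sum _ (fun j _ => hint i j))]
  exact Finset.sum_congr rfl fun i _ => integral_finset_sum _ fun j _ => hint i j

end Aux

set_option maxHeartbeats 1000000 in
/-- **Theorem 1 of the paper.** The covariance matrix of the zero-mean (NLoS) part
`õ = g + H̄ᴴ Φ z̃ + H̃ᴴ Φ z̄ e^{jθ} + H̃ᴴ Φ z̃` of the aggregated RIS-assisted channel.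
Mutual independence of the three random objects `g, z̃, H̃` is encoded as
`g ⊥ z̃` together with `(g, z̃) ⊥ H̃`. -/
theorem covariance_of_aggregated_channel
    {Ω : Type*} [MeasureSpace Ω] [IsProbabilityMeasure (volume : Measure Ω)]
    (L N : ℕ)
    (g : Ω → Fin L → ℂ) (zt : Ω → Fin N → ℂ) (Ht : Ω → Matrix (Fin N) (Fin L) ℂ)
    -- square-integrable entries
    (hg2 : ∀ i, MemLp (fun ω => g ω i) 2 volume)
    (hz2 : ∀ i, MemLp (fun ω => zt ω i) 2 volume)
    (hH2 : ∀ i l, MemLp (fun ω => Ht ω i l) 2 volume)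
    -- entrywise zero mean
    (hg0 : ∀ i, ∫ ω, g ω i = 0)
    (hz0 : ∀ i, ∫ ω, zt ω i = 0)
    (hH0 : ∀ i l, ∫ ω, Ht ω i l = 0)
    -- mutual independence of g, z̃, H̃
    (hind1 : IndepFun g zt volume)
    (hind2 : IndepFun (fun ω => (g ω, zt ω)) Ht volume)
    -- second-order statistics
    (Rg : Matrix (Fin L) (Fin L) ℂ)
    (hRg : Rg = matExp (fun ω => outer (g ω) (g ω)))
    (Rz : Matrix (Fin N) (Fin N) ℂ)
    (hRz : Rz = matExp (fun ω => outer (zt ω) (zt ω)))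
    (Sig : Fin L → Fin L → Matrix (Fin N) (Fin N) ℂ)
    (hSig : ∀ l l', Sig l l'
      = matExp (fun ω => outer (fun i => Ht ω i l) (fun i => Ht ω i l')))
    -- deterministic quantities
    (Hbar : Matrix (Fin N) (Fin L) ℂ) (zbar : Fin N → ℂ)
    (Phi : Matrix (Fin N) (Fin N) ℂ) (θ : ℝ)
    -- the random vector õ
    (ot : Ω → Fin L → ℂ)
    (hot : ot = fun ω => g ω + Hbarᴴ *ᵥ (Phi *ᵥ zt ω)
        + Complex.exp (θ * Complex.I) • ((Ht ω)ᴴ *ᵥ (Phi *ᵥ zbar))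
        + (Ht ω)ᴴ *ᵥ (Phi *ᵥ zt ω))
    -- the matrices Q¹ and Q²
    (Q1 Q2 : Matrix (Fin L) (Fin L) ℂ)
    (hQ1 : ∀ l l', Q1 l l' = (Phi * outer zbar zbar * Phiᴴ * Sig l' l).trace)
    (hQ2 : ∀ l l', Q2 l l' = (Phi * Rz * Phiᴴ * Sig l' l).trace) :
    matExp (fun ω => outer (ot ω) (ot ω))
      = Rg + Hbarᴴ * Phi * Rz * Phiᴴ * Hbar + Q1 + Q2 := by
    classical
  -- abbreviations
  set e : ℂ := Complex.exp (θ * Complex.I) with he_def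
  set M : Matrix (Fin L) (Fin N) ℂ := Hbarᴴ * Phi with hM_def
  set w : Fin N → ℂ := Phi *ᵥ zbar with hw_def
  set ew : Fin N → ℂ := fun a => e * w a with hew_def
  have he : e * star e = 1 := by
    have h1 : star e = Complex.exp (-(θ * Complex.I)) := by
      rw [he_def, ← starRingEnd_apply, ← Complex.exp_conj, _root_.map_mul, Complex.conj_ofReal,
        Complex.conj_I, mul_neg]
    rw [h1, ← Complex.exp_add, add_neg_cancel, Complex.exp_zero]
  -- the four pieces
  set A : Fin L → Ω → ℂ := fun l ω => g ω l with hA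
  set B : Fin L → Ω → ℂ := fun l ω => ∑ i, M l i * zt ω i with hB
  set C : Fin L → Ω → ℂ := fun l ω => ∑ a, star (Ht ω a l) * ew a with hC
  set D : Fin L → Ω → ℂ := fun l ω => ∑ a, star (Ht ω a l) * (∑ k, Phi a k * zt ω k) with hD
  have hsplit : ∀ l ω, ot ω l = A l ω + B l ω + C l ω + D l ω := by
    intro l ω
    rw [hot]
    simp only [Pi.add_apply, Pi.smul_apply, smul_eq_mul, Matrix.mulVec_mulVec, hA, hB, hC, hD,
      hM_def, hew_def, Matrix.mulVec, dotProduct, Matrix.conjTranspose_apply,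
      Finset.mul_sum]
    congr 1
    · congr 1
      exact Finset.sum_congr rfl fun a _ => by ring
    · simp only [Matrix.mul_apply, Matrix.conjTranspose_apply, Finset.sum_mul]
      rw [Finset.sum_comm]
      exact Finset.sum_congr rfl fun a _ => Finset.sum_congr rfl fun k _ => by ring
  -- measurability of evaluations
  have mstar : Measurable (fun z : ℂ => star z) := continuous_star.measurable
  have mgE : ∀ i : Fin L, Measurable fun v : Fin L → ℂ => v i := fun i => measurable_pi_apply i
  have mzE : ∀ i : Fin N, Measurable fun v : Fin N → ℂ => v i := fun i => measurable_pi_apply i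
  have mHE : ∀ (a : Fin N) (l₀ : Fin L),
      Measurable fun Mx : Matrix (Fin N) (Fin L) ℂ => Mx a l₀ :=
    fun a l₀ => (measurable_pi_apply l₀).comp (measurable_pi_apply a)
  have mHP : ∀ (a : Fin N) (l₀ : Fin L) (b : Fin N) (l₁ : Fin L),
      Measurable fun Mx : Matrix (Fin N) (Fin L) ℂ => star (Mx a l₀) * Mx b l₁ :=
    fun a l₀ b l₁ => (mstar.comp (mHE a l₀)).mul (mHE b l₁)
  -- integrability of atoms
  have ig : ∀ i, Integrable (fun ω => g ω i) volume := fun i => (hg2 i).integrable one_le_two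
  have iz : ∀ i, Integrable (fun ω => zt ω i) volume := fun i => (hz2 i).integrable one_le_two
  have iH : ∀ a l₀, Integrable (fun ω => Ht ω a l₀) volume :=
    fun a l₀ => (hH2 a l₀).integrable one_le_two
  have isg : ∀ i, Integrable (fun ω => star (g ω i)) volume :=
    fun i => (memLp_star (hg2 i)).integrable one_le_two
  have isz : ∀ i, Integrable (fun ω => star (zt ω i)) volume :=
    fun i => (memLp_star (hz2 i)).integrable one_le_two
  have isH : ∀ a l₀, Integrable (fun ω => star (Ht ω a l₀)) volume :=
    fun a l₀ => (memLp_star (hH2 a l₀)).integrable one_le_two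
  -- zero means of stars
  have hz0s : ∀ i, ∫ ω, star (zt ω i) = 0 := fun i => by rw [integral_star', hz0 i, star_zero]
  have hH0s : ∀ a l₀, ∫ ω, star (Ht ω a l₀) = 0 := fun a l₀ => by
    rw [integral_star', hH0 a l₀, star_zero]
  -- derived independence
  have indzH : IndepFun zt Ht volume := hind2.comp measurable_snd measurable_id
  have indgH : IndepFun g Ht volume := hind2.comp measurable_fst measurable_id
  -- pair integrabilities
  have P1 : ∀ i j, Integrable (fun ω => g ω i * star (g ω j)) volume :=
    fun i j => L2_mul_integrable (hg2 i) (memLp_star (hg2 j))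
  have P2 : ∀ i j, Integrable (fun ω => g ω i * star (zt ω j)) volume :=
    fun i j => L2_mul_integrable (hg2 i) (memLp_star (hz2 j))
  have P3 : ∀ i b l₁, Integrable (fun ω => g ω i * Ht ω b l₁) volume :=
    fun i b l₁ => L2_mul_integrable (hg2 i) (hH2 b l₁)
  have P4 : ∀ i j, Integrable (fun ω => zt ω i * star (g ω j)) volume :=
    fun i j => L2_mul_integrable (hz2 i) (memLp_star (hg2 j))
  have P5 : ∀ i j, Integrable (fun ω => zt ω i * star (zt ω j)) volume :=
    fun i j => L2_mul_integrable (hz2 i) (memLp_star (hz2 j))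
  have P6 : ∀ i b l₁, Integrable (fun ω => zt ω i * Ht ω b l₁) volume :=
    fun i b l₁ => L2_mul_integrable (hz2 i) (hH2 b l₁)
  have P7 : ∀ a l₀ j, Integrable (fun ω => star (Ht ω a l₀) * star (g ω j)) volume :=
    fun a l₀ j => L2_mul_integrable (memLp_star (hH2 a l₀)) (memLp_star (hg2 j))
  have P8 : ∀ a l₀ j, Integrable (fun ω => star (Ht ω a l₀) * star (zt ω j)) volume :=
    fun a l₀ j => L2_mul_integrable (memLp_star (hH2 a l₀)) (memLp_star (hz2 j))
  have P9 : ∀ a l₀ b l₁, Integrable (fun ω => star (Ht ω a l₀) * Ht ω b l₁) volume :=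
    fun a l₀ b l₁ => L2_mul_integrable (memLp_star (hH2 a l₀)) (hH2 b l₁)
  -- triple and quadruple integrabilities
  have T7 : ∀ i m b l₁, Integrable (fun ω => g ω i * star (zt ω m) * Ht ω b l₁) volume :=
    fun i m b l₁ =>
      (hind2.comp (((mgE i).comp measurable_fst).mul (mstar.comp ((mzE m).comp measurable_snd)))
        (mHE b l₁)).integrable_mul (P2 i m) (iH b l₁)
  have T8 : ∀ i m b l₁, Integrable (fun ω => zt ω i * star (zt ω m) * Ht ω b l₁) volume :=
    fun i m b l₁ =>
      (indzH.comp ((mzE i).mul (mstar.comp (mzE m))) (mHE b l₁)).integrable_mul (P5 i m) (iH b l₁)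
  have T9 : ∀ a l₀ b l₁ m,
      Integrable (fun ω => star (Ht ω a l₀) * Ht ω b l₁ * star (zt ω m)) volume :=
    fun a l₀ b l₁ m =>
      (indzH.symm.comp (mHP a l₀ b l₁) (mstar.comp (mzE m))).integrable_mul (P9 a l₀ b l₁) (isz m)
  have T10 : ∀ k j a l₀,
      Integrable (fun ω => zt ω k * star (g ω j) * star (Ht ω a l₀)) volume :=
    fun k j a l₀ =>
      (hind2.comp (((mzE k).comp measurable_snd).mul (mstar.comp ((mgE j).comp measurable_fst)))
        (mstar.comp (mHE a l₀))).integrable_mul (P4 k j) (isH a l₀)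
  have T11 : ∀ k j a l₀,
      Integrable (fun ω => zt ω k * star (zt ω j) * star (Ht ω a l₀)) volume :=
    fun k j a l₀ =>
      (indzH.comp ((mzE k).mul (mstar.comp (mzE j))) (mstar.comp (mHE a l₀))).integrable_mul
        (P5 k j) (isH a l₀)
  have T12 : ∀ a l₀ b l₁ k,
      Integrable (fun ω => star (Ht ω a l₀) * Ht ω b l₁ * zt ω k) volume :=
    fun a l₀ b l₁ k =>
      (indzH.symm.comp (mHP a l₀ b l₁) (mzE k)).integrable_mul (P9 a l₀ b l₁) (iz k)
  have T13 : ∀ a l₀ b l₁ k m,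
      Integrable (fun ω => star (Ht ω a l₀) * Ht ω b l₁ * (zt ω k * star (zt ω m))) volume :=
    fun a l₀ b l₁ k m =>
      (indzH.symm.comp (mHP a l₀ b l₁) ((mzE k).mul (mstar.comp (mzE m)))).integrable_mul
        (P9 a l₀ b l₁) (P5 k m)
  -- expectations
  have E1 : ∀ i j, ∫ ω, g ω i * star (g ω j) = Rg i j := fun i j => by rw [hRg]; rfl
  have E2 : ∀ i j, ∫ ω, zt ω i * star (zt ω j) = Rz i j := fun i j => by rw [hRz]; rfl
  have E3p : ∀ a l₀ b l₁, ∫ ω, Ht ω a l₀ * star (Ht ω b l₁) = Sig l₀ l₁ a b :=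
    fun a l₀ b l₁ => by rw [hSig]; rfl
  have E3 : ∀ a l₀ b l₁, ∫ ω, star (Ht ω a l₀) * Ht ω b l₁ = Sig l₁ l₀ b a := by
    intro a l₀ b l₁
    rw [show (fun ω => star (Ht ω a l₀) * Ht ω b l₁)
        = fun ω => Ht ω b l₁ * star (Ht ω a l₀) from funext fun ω => mul_comm _ _]
    exact E3p b l₁ a l₀
  have E4 : ∀ a l₀ b l₁ k m,
      ∫ ω, star (Ht ω a l₀) * Ht ω b l₁ * (zt ω k * star (zt ω m))
        = Sig l₁ l₀ b a * Rz k m := by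
    intro a l₀ b l₁ k m
    have h : IndepFun (fun ω => star (Ht ω a l₀) * Ht ω b l₁)
        (fun ω => zt ω k * star (zt ω m)) volume :=
      indzH.symm.comp (mHP a l₀ b l₁) ((mzE k).mul (mstar.comp (mzE m)))
    rw [indep_integral_mul_complex h (P9 a l₀ b l₁) (P5 k m), E3 a l₀ b l₁, E2 k m]
  have Z1 : ∀ i j, ∫ ω, g ω i * star (zt ω j) = 0 := by
    intro i j
    have h : IndepFun (fun ω => g ω i) (fun ω => star (zt ω j)) volume :=
      hind1.comp (mgE i) (mstar.comp (mzE j))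
    rw [indep_integral_mul_complex h (ig i) (isz j), hg0 i, zero_mul]
  have Z2 : ∀ i b l₁, ∫ ω, g ω i * Ht ω b l₁ = 0 := by
    intro i b l₁
    have h : IndepFun (fun ω => g ω i) (fun ω => Ht ω b l₁) volume :=
      indgH.comp (mgE i) (mHE b l₁)
    rw [indep_integral_mul_complex h (ig i) (iH b l₁), hH0 b l₁, mul_zero]
  have Z3 : ∀ i j, ∫ ω, zt ω i * star (g ω j) = 0 := by
    intro i j
    have h : IndepFun (fun ω => zt ω i) (fun ω => star (g ω j)) volume :=
      hind1.symm.comp (mzE i) (mstar.comp (mgE j))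
    rw [indep_integral_mul_complex h (iz i) (isg j), hz0 i, zero_mul]
  have Z4 : ∀ i b l₁, ∫ ω, zt ω i * Ht ω b l₁ = 0 := by
    intro i b l₁
    have h : IndepFun (fun ω => zt ω i) (fun ω => Ht ω b l₁) volume :=
      indzH.comp (mzE i) (mHE b l₁)
    rw [indep_integral_mul_complex h (iz i) (iH b l₁), hz0 i, zero_mul]
  have Z5 : ∀ a l₀ j, ∫ ω, star (Ht ω a l₀) * star (g ω j) = 0 := by
    intro a l₀ j
    have h : IndepFun (fun ω => star (Ht ω a l₀)) (fun ω => star (g ω j)) volume :=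
      indgH.symm.comp (mstar.comp (mHE a l₀)) (mstar.comp (mgE j))
    rw [indep_integral_mul_complex h (isH a l₀) (isg j), hH0s a l₀, zero_mul]
  have Z6 : ∀ a l₀ j, ∫ ω, star (Ht ω a l₀) * star (zt ω j) = 0 := by
    intro a l₀ j
    have h : IndepFun (fun ω => star (Ht ω a l₀)) (fun ω => star (zt ω j)) volume :=
      indzH.symm.comp (mstar.comp (mHE a l₀)) (mstar.comp (mzE j))
    rw [indep_integral_mul_complex h (isH a l₀) (isz j), hH0s a l₀, zero_mul]
  have Z7 : ∀ i m b l₁, ∫ ω, g ω i * star (zt ω m) * Ht ω b l₁ = 0 := by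
    intro i m b l₁
    have h : IndepFun (fun ω => g ω i * star (zt ω m)) (fun ω => Ht ω b l₁) volume :=
      hind2.comp (((mgE i).comp measurable_fst).mul (mstar.comp ((mzE m).comp measurable_snd))) (mHE b l₁)
    rw [indep_integral_mul_complex h (P2 i m) (iH b l₁), hH0 b l₁, mul_zero]
  have Z8 : ∀ i m b l₁, ∫ ω, zt ω i * star (zt ω m) * Ht ω b l₁ = 0 := by
    intro i m b l₁
    have h : IndepFun (fun ω => zt ω i * star (zt ω m)) (fun ω => Ht ω b l₁) volume :=
      indzH.comp ((mzE i).mul (mstar.comp (mzE m))) (mHE b l₁)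
    rw [indep_integral_mul_complex h (P5 i m) (iH b l₁), hH0 b l₁, mul_zero]
  have Z9 : ∀ a l₀ b l₁ m, ∫ ω, star (Ht ω a l₀) * Ht ω b l₁ * star (zt ω m) = 0 := by
    intro a l₀ b l₁ m
    have h : IndepFun (fun ω => star (Ht ω a l₀) * Ht ω b l₁) (fun ω => star (zt ω m)) volume :=
      indzH.symm.comp (mHP a l₀ b l₁) (mstar.comp (mzE m))
    rw [indep_integral_mul_complex h (P9 a l₀ b l₁) (isz m), hz0s m, mul_zero]
  have Z10 : ∀ k j a l₀, ∫ ω, zt ω k * star (g ω j) * star (Ht ω a l₀) = 0 := by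
    intro k j a l₀
    have h : IndepFun (fun ω => zt ω k * star (g ω j)) (fun ω => star (Ht ω a l₀)) volume :=
      hind2.comp (((mzE k).comp measurable_snd).mul (mstar.comp ((mgE j).comp measurable_fst))) (mstar.comp (mHE a l₀))
    rw [indep_integral_mul_complex h (P4 k j) (isH a l₀), hH0s a l₀, mul_zero]
  have Z11 : ∀ k j a l₀, ∫ ω, zt ω k * star (zt ω j) * star (Ht ω a l₀) = 0 := by
    intro k j a l₀
    have h : IndepFun (fun ω => zt ω k * star (zt ω j)) (fun ω => star (Ht ω a l₀)) volume :=
      indzH.comp ((mzE k).mul (mstar.comp (mzE j))) (mstar.comp (mHE a l₀))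
    rw [indep_integral_mul_complex h (P5 k j) (isH a l₀), hH0s a l₀, mul_zero]
  have Z12 : ∀ a l₀ b l₁ k, ∫ ω, star (Ht ω a l₀) * Ht ω b l₁ * zt ω k = 0 := by
    intro a l₀ b l₁ k
    have h : IndepFun (fun ω => star (Ht ω a l₀) * Ht ω b l₁) (fun ω => zt ω k) volume :=
      indzH.symm.comp (mHP a l₀ b l₁) (mzE k)
    rw [indep_integral_mul_complex h (P9 a l₀ b l₁) (iz k), hz0 k, mul_zero]
  -- MemLp of the first three pieces
  have mA : ∀ l₀, MemLp (A l₀) 2 volume := fun l₀ => by simp only [hA]; exact hg2 l₀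
  have mB : ∀ l₀, MemLp (B l₀) 2 volume := fun l₀ => by
    simp only [hB]
    exact memLp_finset_sum (f := fun i ω => M l₀ i * zt ω i) Finset.univ
      (fun i _ => (hz2 i).const_mul _)
  have mC : ∀ l₀, MemLp (C l₀) 2 volume := fun l₀ => by
    simp only [hC]
    refine memLp_finset_sum (f := fun a ω => star (Ht ω a l₀) * ew a) Finset.univ
      (fun a _ => ?_)
    show MemLp (fun ω => star (Ht ω a l₀) * ew a) 2 volume
    have h2 : (fun ω => star (Ht ω a l₀) * ew a) = fun ω => ew a * star (Ht ω a l₀) :=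
      funext fun ω => mul_comm _ _
    rw [h2]
    exact (memLp_star (hH2 a l₀)).const_mul _
  -- deterministic matrix identities
  have houterM : Phi * outer zbar zbar * Phiᴴ = Matrix.of (fun a b => w a * star (w b)) := by
    ext a b
    simp only [Matrix.mul_apply, outer, Matrix.conjTranspose_apply, Matrix.of_apply, hw_def,
      Matrix.mulVec, dotProduct, star_sum, star_mul', Finset.sum_mul, Finset.mul_sum]
    exact Finset.sum_congr rfl fun k _ => Finset.sum_congr rfl fun m _ => by ring
  have hPRPM : Phi * Rz * Phiᴴ
      = Matrix.of (fun a b => ∑ k, ∑ m, (Phi a k * star (Phi b m)) * Rz k m) := by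
    ext a b
    simp only [Matrix.mul_apply, Matrix.conjTranspose_apply, Matrix.of_apply, Finset.sum_mul]
    rw [Finset.sum_comm]
    exact Finset.sum_congr rfl fun k _ => Finset.sum_congr rfl fun m _ => by ring
  have hMRM : Hbarᴴ * Phi * Rz * Phiᴴ * Hbar = M * Rz * Mᴴ := by
    rw [hM_def, Matrix.conjTranspose_mul, Matrix.conjTranspose_conjTranspose,
      Matrix.mul_assoc (Hbarᴴ * Phi * Rz)]
  have hewp : ∀ a b, ew a * star (ew b) = w a * star (w b) := by
    intro a b
    simp only [hew_def]
    rw [star_mul']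
    linear_combination (w a * star (w b)) * he
  -- the key entrywise computation
  have key : ∀ l l', ∫ ω, ot ω l * star (ot ω l')
      = Rg l l' + (Hbarᴴ * Phi * Rz * Phiᴴ * Hbar) l l' + Q1 l l' + Q2 l l' := by
    intro l l'
    -- pointwise expansions of the sixteen products
    have pAB : (fun ω => A l ω * star (B l' ω))
        = fun ω => ∑ j, star (M l' j) * (g ω l * star (zt ω j)) := by
      funext ω
      simp only [hA, hB, hC, hD, star_sum, star_mul', star_star, Finset.mul_sum,
        Finset.sum_mul]
      exact Finset.sum_congr rfl fun j _ => by ring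
    have pAC : (fun ω => A l ω * star (C l' ω))
        = fun ω => ∑ b, star (ew b) * (g ω l * Ht ω b l') := by
      funext ω
      simp only [hA, hB, hC, hD, star_sum, star_mul', star_star, Finset.mul_sum,
        Finset.sum_mul]
      exact Finset.sum_congr rfl fun b _ => by ring
    have pAD : (fun ω => A l ω * star (D l' ω))
        = fun ω => ∑ b, ∑ m, star (Phi b m) * (g ω l * star (zt ω m) * Ht ω b l') := by
      funext ω
      simp only [hA, hB, hC, hD, star_sum, star_mul', star_star, Finset.mul_sum,
        Finset.sum_mul]
      exact Finset.sum_congr rfl fun b _ => Finset.sum_congr rfl fun m _ => by ring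
    have pBA : (fun ω => B l ω * star (A l' ω))
        = fun ω => ∑ i, M l i * (zt ω i * star (g ω l')) := by
      funext ω
      simp only [hA, hB, hC, hD, star_sum, star_mul', star_star, Finset.mul_sum,
        Finset.sum_mul]
      exact Finset.sum_congr rfl fun i _ => by ring
    have pBB : (fun ω => B l ω * star (B l' ω))
        = fun ω => ∑ j, ∑ i, (M l i * star (M l' j)) * (zt ω i * star (zt ω j)) := by
      funext ω
      simp only [hA, hB, hC, hD, star_sum, star_mul', star_star, Finset.mul_sum,
        Finset.sum_mul]
      exact Finset.sum_congr rfl fun j _ => Finset.sum_congr rfl fun i _ => by ring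
    have pBC : (fun ω => B l ω * star (C l' ω))
        = fun ω => ∑ b, ∑ i, (M l i * star (ew b)) * (zt ω i * Ht ω b l') := by
      funext ω
      simp only [hA, hB, hC, hD, star_sum, star_mul', star_star, Finset.mul_sum,
        Finset.sum_mul]
      exact Finset.sum_congr rfl fun b _ => Finset.sum_congr rfl fun i _ => by ring
    have pBD : (fun ω => B l ω * star (D l' ω))
        = fun ω => ∑ b, ∑ m, ∑ i,
            (M l i * star (Phi b m)) * (zt ω i * star (zt ω m) * Ht ω b l') := by
      funext ω
      simp only [hA, hB, hC, hD, star_sum, star_mul', star_star, Finset.mul_sum,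
        Finset.sum_mul]
      exact Finset.sum_congr rfl fun b _ => Finset.sum_congr rfl fun m _ =>
        Finset.sum_congr rfl fun i _ => by ring
    have pCA : (fun ω => C l ω * star (A l' ω))
        = fun ω => ∑ a, ew a * (star (Ht ω a l) * star (g ω l')) := by
      funext ω
      simp only [hA, hB, hC, hD, star_sum, star_mul', star_star, Finset.mul_sum,
        Finset.sum_mul]
      exact Finset.sum_congr rfl fun a _ => by ring
    have pCB : (fun ω => C l ω * star (B l' ω))
        = fun ω => ∑ j, ∑ a, (ew a * star (M l' j)) * (star (Ht ω a l) * star (zt ω j)) := by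
      funext ω
      simp only [hA, hB, hC, hD, star_sum, star_mul', star_star, Finset.mul_sum,
        Finset.sum_mul]
      exact Finset.sum_congr rfl fun j _ => Finset.sum_congr rfl fun a _ => by ring
    have pCC : (fun ω => C l ω * star (C l' ω))
        = fun ω => ∑ b, ∑ a, (ew a * star (ew b)) * (star (Ht ω a l) * Ht ω b l') := by
      funext ω
      simp only [hA, hB, hC, hD, star_sum, star_mul', star_star, Finset.mul_sum,
        Finset.sum_mul]
      exact Finset.sum_congr rfl fun b _ => Finset.sum_congr rfl fun a _ => by ring
    have pCD : (fun ω => C l ω * star (D l' ω))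
        = fun ω => ∑ b, ∑ m, ∑ a,
            (ew a * star (Phi b m)) * (star (Ht ω a l) * Ht ω b l' * star (zt ω m)) := by
      funext ω
      simp only [hA, hB, hC, hD, star_sum, star_mul', star_star, Finset.mul_sum,
        Finset.sum_mul]
      exact Finset.sum_congr rfl fun b _ => Finset.sum_congr rfl fun m _ =>
        Finset.sum_congr rfl fun a _ => by ring
    have pDA : (fun ω => D l ω * star (A l' ω))
        = fun ω => ∑ a, ∑ k, Phi a k * (zt ω k * star (g ω l') * star (Ht ω a l)) := by
      funext ω
      simp only [hA, hB, hC, hD, star_sum, star_mul', star_star, Finset.mul_sum,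
        Finset.sum_mul]
      exact Finset.sum_congr rfl fun a _ => Finset.sum_congr rfl fun k _ => by ring
    have pDB : (fun ω => D l ω * star (B l' ω))
        = fun ω => ∑ j, ∑ a, ∑ k,
            (Phi a k * star (M l' j)) * (zt ω k * star (zt ω j) * star (Ht ω a l)) := by
      funext ω
      simp only [hA, hB, hC, hD, star_sum, star_mul', star_star, Finset.mul_sum,
        Finset.sum_mul]
      exact Finset.sum_congr rfl fun j _ => Finset.sum_congr rfl fun a _ =>
        Finset.sum_congr rfl fun k _ => by ring
    have pDC : (fun ω => D l ω * star (C l' ω))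
        = fun ω => ∑ b, ∑ a, ∑ k,
            (Phi a k * star (ew b)) * (star (Ht ω a l) * Ht ω b l' * zt ω k) := by
      funext ω
      simp only [hA, hB, hC, hD, star_sum, star_mul', star_star, Finset.mul_sum,
        Finset.sum_mul]
      exact Finset.sum_congr rfl fun b _ => Finset.sum_congr rfl fun a _ =>
        Finset.sum_congr rfl fun k _ => by ring
    have pDD : (fun ω => D l ω * star (D l' ω))
        = fun ω => ∑ b, ∑ m, ∑ a, ∑ k,
            (Phi a k * star (Phi b m))
              * (star (Ht ω a l) * Ht ω b l' * (zt ω k * star (zt ω m))) := by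
      funext ω
      simp only [hA, hB, hC, hD, star_sum, star_mul', star_star, Finset.mul_sum,
        Finset.sum_mul]
      exact Finset.sum_congr rfl fun b _ => Finset.sum_congr rfl fun m _ =>
        Finset.sum_congr rfl fun a _ => Finset.sum_congr rfl fun k _ => by ring
    -- integrability of the sixteen products
    have intAA : Integrable (fun ω => A l ω * star (A l' ω)) volume :=
      L2_mul_integrable (mA l) (memLp_star (mA l'))
    have intAB : Integrable (fun ω => A l ω * star (B l' ω)) volume :=
      L2_mul_integrable (mA l) (memLp_star (mB l'))
    have intAC : Integrable (fun ω => A l ω * star (C l' ω)) volume :=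
      L2_mul_integrable (mA l) (memLp_star (mC l'))
    have intBA : Integrable (fun ω => B l ω * star (A l' ω)) volume :=
      L2_mul_integrable (mB l) (memLp_star (mA l'))
    have intBB : Integrable (fun ω => B l ω * star (B l' ω)) volume :=
      L2_mul_integrable (mB l) (memLp_star (mB l'))
    have intBC : Integrable (fun ω => B l ω * star (C l' ω)) volume :=
      L2_mul_integrable (mB l) (memLp_star (mC l'))
    have intCA : Integrable (fun ω => C l ω * star (A l' ω)) volume :=
      L2_mul_integrable (mC l) (memLp_star (mA l'))
    have intCB : Integrable (fun ω => C l ω * star (B l' ω)) volume :=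
      L2_mul_integrable (mC l) (memLp_star (mB l'))
    have intCC : Integrable (fun ω => C l ω * star (C l' ω)) volume :=
      L2_mul_integrable (mC l) (memLp_star (mC l'))
    have intAD : Integrable (fun ω => A l ω * star (D l' ω)) volume := by
      rw [pAD]
      exact integrable_finset_sum _ fun b _ => integrable_finset_sum _ fun m _ =>
        (T7 l m b l').const_mul _
    have intBD : Integrable (fun ω => B l ω * star (D l' ω)) volume := by
      rw [pBD]
      exact integrable_finset_sum _ fun b _ => integrable_finset_sum _ fun m _ =>
        integrable_finset_sum _ fun i _ => (T8 i m b l').const_mul _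
    have intCD : Integrable (fun ω => C l ω * star (D l' ω)) volume := by
      rw [pCD]
      exact integrable_finset_sum _ fun b _ => integrable_finset_sum _ fun m _ =>
        integrable_finset_sum _ fun a _ => (T9 a l b l' m).const_mul _
    have intDA : Integrable (fun ω => D l ω * star (A l' ω)) volume := by
      rw [pDA]
      exact integrable_finset_sum _ fun a _ => integrable_finset_sum _ fun k _ =>
        (T10 k l' a l).const_mul _
    have intDB : Integrable (fun ω => D l ω * star (B l' ω)) volume := by
      rw [pDB]
      exact integrable_finset_sum _ fun j _ => integrable_finset_sum _ fun a _ =>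
        integrable_finset_sum _ fun k _ => (T11 k j a l).const_mul _
    have intDC : Integrable (fun ω => D l ω * star (C l' ω)) volume := by
      rw [pDC]
      exact integrable_finset_sum _ fun b _ => integrable_finset_sum _ fun a _ =>
        integrable_finset_sum _ fun k _ => (T12 a l b l' k).const_mul _
    have intDD : Integrable (fun ω => D l ω * star (D l' ω)) volume := by
      rw [pDD]
      exact integrable_finset_sum _ fun b _ => integrable_finset_sum _ fun m _ =>
        integrable_finset_sum _ fun a _ => integrable_finset_sum _ fun k _ =>
          (T13 a l b l' k m).const_mul _
    -- the sixteen integrals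
    have JAA : ∫ ω, A l ω * star (A l' ω) = Rg l l' := by
      simp only [hA]
      exact E1 l l'
    have JAB : ∫ ω, A l ω * star (B l' ω) = 0 := by
      rw [pAB, integral_finset_sum _ (fun j _ => (P2 l j).const_mul _)]
      exact Finset.sum_eq_zero fun j _ => by rw [integral_const_mul, Z1 l j, mul_zero]
    have JAC : ∫ ω, A l ω * star (C l' ω) = 0 := by
      rw [pAC, integral_finset_sum _ (fun b _ => (P3 l b l').const_mul _)]
      exact Finset.sum_eq_zero fun b _ => by rw [integral_const_mul, Z2 l b l', mul_zero]
    have JAD : ∫ ω, A l ω * star (D l' ω) = 0 := by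
      rw [pAD, integral_finset_sum _ (fun b _ => integrable_finset_sum _ fun m _ =>
        (T7 l m b l').const_mul _)]
      refine Finset.sum_eq_zero fun b _ => ?_
      rw [integral_finset_sum _ (fun m _ => (T7 l m b l').const_mul _)]
      exact Finset.sum_eq_zero fun m _ => by rw [integral_const_mul, Z7 l m b l', mul_zero]
    have JBA : ∫ ω, B l ω * star (A l' ω) = 0 := by
      rw [pBA, integral_finset_sum _ (fun i _ => (P4 i l').const_mul _)]
      exact Finset.sum_eq_zero fun i _ => by rw [integral_const_mul, Z3 i l', mul_zero]
    have JBB : ∫ ω, B l ω * star (B l' ω) = (Hbarᴴ * Phi * Rz * Phiᴴ * Hbar) l l' := by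
      rw [pBB, integral_finset_sum _ (fun j _ => integrable_finset_sum _ fun i _ =>
        (P5 i j).const_mul _), hMRM]
      have h1 : ∀ j ∈ (Finset.univ : Finset (Fin N)),
          ∫ ω, ∑ i, (M l i * star (M l' j)) * (zt ω i * star (zt ω j))
            = ∑ i, (M l i * star (M l' j)) * Rz i j := fun j _ => by
        rw [integral_finset_sum _ (fun i _ => (P5 i j).const_mul _)]
        exact Finset.sum_congr rfl fun i _ => by rw [integral_const_mul, E2 i j]
      rw [Finset.sum_congr rfl h1]
      simp only [Matrix.mul_apply, Matrix.conjTranspose_apply, Finset.sum_mul]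
      exact Finset.sum_congr rfl fun j _ => Finset.sum_congr rfl fun i _ => by ring
    have JBC : ∫ ω, B l ω * star (C l' ω) = 0 := by
      rw [pBC, integral_finset_sum _ (fun b _ => integrable_finset_sum _ fun i _ =>
        (P6 i b l').const_mul _)]
      refine Finset.sum_eq_zero fun b _ => ?_
      rw [integral_finset_sum _ (fun i _ => (P6 i b l').const_mul _)]
      exact Finset.sum_eq_zero fun i _ => by rw [integral_const_mul, Z4 i b l', mul_zero]
    have JBD : ∫ ω, B l ω * star (D l' ω) = 0 := by
      rw [pBD, integral_finset_sum _ (fun b _ => integrable_finset_sum _ fun m _ =>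
        integrable_finset_sum _ fun i _ => (T8 i m b l').const_mul _)]
      refine Finset.sum_eq_zero fun b _ => ?_
      rw [integral_finset_sum _ (fun m _ => integrable_finset_sum _ fun i _ =>
        (T8 i m b l').const_mul _)]
      refine Finset.sum_eq_zero fun m _ => ?_
      rw [integral_finset_sum _ (fun i _ => (T8 i m b l').const_mul _)]
      exact Finset.sum_eq_zero fun i _ => by rw [integral_const_mul, Z8 i m b l', mul_zero]
    have JCA : ∫ ω, C l ω * star (A l' ω) = 0 := by
      rw [pCA, integral_finset_sum _ (fun a _ => (P7 a l l').const_mul _)]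
      exact Finset.sum_eq_zero fun a _ => by rw [integral_const_mul, Z5 a l l', mul_zero]
    have JCB : ∫ ω, C l ω * star (B l' ω) = 0 := by
      rw [pCB, integral_finset_sum _ (fun j _ => integrable_finset_sum _ fun a _ =>
        (P8 a l j).const_mul _)]
      refine Finset.sum_eq_zero fun j _ => ?_
      rw [integral_finset_sum _ (fun a _ => (P8 a l j).const_mul _)]
      exact Finset.sum_eq_zero fun a _ => by rw [integral_const_mul, Z6 a l j, mul_zero]
    have JCC : ∫ ω, C l ω * star (C l' ω) = Q1 l l' := by
      rw [pCC, integral_finset_sum _ (fun b _ => integrable_finset_sum _ fun a _ =>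
        (P9 a l b l').const_mul _)]
      have h1 : ∀ b ∈ (Finset.univ : Finset (Fin N)),
          ∫ ω, ∑ a, (ew a * star (ew b)) * (star (Ht ω a l) * Ht ω b l')
            = ∑ a, (ew a * star (ew b)) * Sig l' l b a := fun b _ => by
        rw [integral_finset_sum _ (fun a _ => (P9 a l b l').const_mul _)]
        exact Finset.sum_congr rfl fun a _ => by rw [integral_const_mul, E3 a l b l']
      rw [Finset.sum_congr rfl h1, hQ1, houterM]
      have htr : (Matrix.of (fun a b => w a * star (w b)) * Sig l' l).trace
          = ∑ a, ∑ b, (w a * star (w b)) * Sig l' l b a := by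
        simp only [Matrix.trace, Matrix.diag, Matrix.mul_apply, Matrix.of_apply]
      rw [htr, show (∑ a, ∑ b, (w a * star (w b)) * Sig l' l b a)
          = ∑ b, ∑ a, (w a * star (w b)) * Sig l' l b a from Finset.sum_comm]
      exact Finset.sum_congr rfl fun b _ => Finset.sum_congr rfl fun a _ => by
        rw [hewp a b]
    have JCD : ∫ ω, C l ω * star (D l' ω) = 0 := by
      rw [pCD, integral_finset_sum _ (fun b _ => integrable_finset_sum _ fun m _ =>
        integrable_finset_sum _ fun a _ => (T9 a l b l' m).const_mul _)]
      refine Finset.sum_eq_zero fun b _ => ?_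
      rw [integral_finset_sum _ (fun m _ => integrable_finset_sum _ fun a _ =>
        (T9 a l b l' m).const_mul _)]
      refine Finset.sum_eq_zero fun m _ => ?_
      rw [integral_finset_sum _ (fun a _ => (T9 a l b l' m).const_mul _)]
      exact Finset.sum_eq_zero fun a _ => by rw [integral_const_mul, Z9 a l b l' m, mul_zero]
    have JDA : ∫ ω, D l ω * star (A l' ω) = 0 := by
      rw [pDA, integral_finset_sum _ (fun a _ => integrable_finset_sum _ fun k _ =>
        (T10 k l' a l).const_mul (Phi a k))]
      refine Finset.sum_eq_zero fun a _ => ?_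
      rw [integral_finset_sum _ (fun k _ => (T10 k l' a l).const_mul (Phi a k))]
      exact Finset.sum_eq_zero fun k _ => by rw [integral_const_mul, Z10 k l' a l, mul_zero]
    have JDB : ∫ ω, D l ω * star (B l' ω) = 0 := by
      rw [pDB, integral_finset_sum _ (fun j _ => integrable_finset_sum _ fun a _ =>
        integrable_finset_sum _ fun k _ => (T11 k j a l).const_mul _)]
      refine Finset.sum_eq_zero fun j _ => ?_
      rw [integral_finset_sum _ (fun a _ => integrable_finset_sum _ fun k _ =>
        (T11 k j a l).const_mul _)]
      refine Finset.sum_eq_zero fun a _ => ?_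
      rw [integral_finset_sum _ (fun k _ => (T11 k j a l).const_mul _)]
      exact Finset.sum_eq_zero fun k _ => by rw [integral_const_mul, Z11 k j a l, mul_zero]
    have JDC : ∫ ω, D l ω * star (C l' ω) = 0 := by
      rw [pDC, integral_finset_sum _ (fun b _ => integrable_finset_sum _ fun a _ =>
        integrable_finset_sum _ fun k _ => (T12 a l b l' k).const_mul _)]
      refine Finset.sum_eq_zero fun b _ => ?_
      rw [integral_finset_sum _ (fun a _ => integrable_finset_sum _ fun k _ =>
        (T12 a l b l' k).const_mul _)]
      refine Finset.sum_eq_zero fun a _ => ?_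
      rw [integral_finset_sum _ (fun k _ => (T12 a l b l' k).const_mul _)]
      exact Finset.sum_eq_zero fun k _ => by rw [integral_const_mul, Z12 a l b l' k, mul_zero]
    have JDD : ∫ ω, D l ω * star (D l' ω) = Q2 l l' := by
      rw [pDD, integral_finset_sum _ (fun b _ => integrable_finset_sum _ fun m _ =>
        integrable_finset_sum _ fun a _ => integrable_finset_sum _ fun k _ =>
          (T13 a l b l' k m).const_mul _)]
      have h1 : ∀ b ∈ (Finset.univ : Finset (Fin N)),
          ∫ ω, ∑ m, ∑ a, ∑ k, (Phi a k * star (Phi b m))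
              * (star (Ht ω a l) * Ht ω b l' * (zt ω k * star (zt ω m)))
            = ∑ m, ∑ a, ∑ k, (Phi a k * star (Phi b m)) * (Sig l' l b a * Rz k m) :=
        fun b _ => by
          rw [integral_finset_sum _ (fun m _ => integrable_finset_sum _ fun a _ =>
            integrable_finset_sum _ fun k _ => (T13 a l b l' k m).const_mul _)]
          refine Finset.sum_congr rfl fun m _ => ?_
          rw [integral_finset_sum _ (fun a _ => integrable_finset_sum _ fun k _ =>
            (T13 a l b l' k m).const_mul _)]
          refine Finset.sum_congr rfl fun a _ => ?_
          rw [integral_finset_sum _ (fun k _ => (T13 a l b l' k m).const_mul _)]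
          exact Finset.sum_congr rfl fun k _ => by
            rw [integral_const_mul, E4 a l b l' k m]
      rw [Finset.sum_congr rfl h1, hQ2, hPRPM]
      have htr : (Matrix.of (fun a b => ∑ k, ∑ m, (Phi a k * star (Phi b m)) * Rz k m)
            * Sig l' l).trace
          = ∑ a, ∑ b, (∑ k, ∑ m, (Phi a k * star (Phi b m)) * Rz k m) * Sig l' l b a := by
        simp only [Matrix.trace, Matrix.diag, Matrix.mul_apply, Matrix.of_apply]
      rw [htr]
      simp only [Finset.sum_mul]
      calc ∑ b, ∑ m, ∑ a, ∑ k,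
            (Phi a k * star (Phi b m)) * (Sig l' l b a * Rz k m)
          = ∑ b, ∑ a, ∑ m, ∑ k,
            (Phi a k * star (Phi b m)) * (Sig l' l b a * Rz k m) :=
            Finset.sum_congr rfl fun b _ => Finset.sum_comm
        _ = ∑ a, ∑ b, ∑ m, ∑ k,
            (Phi a k * star (Phi b m)) * (Sig l' l b a * Rz k m) := Finset.sum_comm
        _ = ∑ a, ∑ b, ∑ k, ∑ m,
            (Phi a k * star (Phi b m)) * (Sig l' l b a * Rz k m) :=
            Finset.sum_congr rfl fun a _ => Finset.sum_congr rfl fun b _ => Finset.sum_comm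
        _ = ∑ a, ∑ b, ∑ k, ∑ m,
            (Phi a k * star (Phi b m)) * Rz k m * Sig l' l b a :=
            Finset.sum_congr rfl fun a _ => Finset.sum_congr rfl fun b _ =>
              Finset.sum_congr rfl fun k _ => Finset.sum_congr rfl fun m _ => by ring
    -- assembling
    have hint : ∀ i j, Integrable
        (fun ω => ![A l, B l, C l, D l] i ω * star (![A l', B l', C l', D l'] j ω))
        volume := by
      intro i j
      fin_cases i <;> fin_cases j
      · exact intAA
      · exact intAB
      · exact intAC
      · exact intAD
      · exact intBA
      · exact intBB
      · exact intBC
      · exact intBD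
      · exact intCA
      · exact intCB
      · exact intCC
      · exact intCD
      · exact intDA
      · exact intDB
      · exact intDC
      · exact intDD
    have main := integral_mul_conj_sum4 (μ := volume)
      ![A l, B l, C l, D l] ![A l', B l', C l', D l'] hint
    simp only [Fin.sum_univ_four, Matrix.cons_val_zero, Matrix.cons_val_one,
      Matrix.head_cons, Matrix.cons_val_two, Matrix.tail_cons, Matrix.cons_val_three]
      at main
    rw [show (fun ω => ot ω l * star (ot ω l'))
        = fun ω => (A l ω + B l ω + C l ω + D l ω)
            * star (A l' ω + B l' ω + C l' ω + D l' ω) from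
      funext fun ω => by rw [hsplit l ω, hsplit l' ω], main,
      JAA, JAB, JAC, JAD, JBA, JBB, JBC, JBD, JCA, JCB, JCC, JCD, JDA, JDB, JDC, JDD]
    ring
  -- conclude
  ext l l'
  simp only [matExp, outer, Matrix.of_apply, Matrix.add_apply]
  exact key l l'
end

section
/- Under the pilot model below, let k, i ∈ S with k ≠ i, and assume in addition that φ_k and φ_i are independent of each other and each is uniformly distributed on [−π, π]. Then E[ô_i^H ô_k] = √(p̂_k p̂_i) · τ_p · tr(R_k Ψ^{-1} R_i), where ô_i = ō_i exp(jφ_i) + √(p̂_i) R_i Ψ^{-1}(y − ȳ). -/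
open MeasureTheory ProbabilityTheory Matrix

section Helpers

variable {Ω : Type*} [MeasureSpace Ω] [IsProbabilityMeasure (volume : Measure Ω)]

lemma l2mul {f g : Ω → ℂ} (hf : MemLp f 2 volume) (hg : MemLp g 2 volume) :
    Integrable (fun ω => f ω * g ω) volume := by
  haveI : ENNReal.HolderTriple 2 2 1 := ⟨by rw [inv_one]; exact ENNReal.inv_two_add_inv_two⟩
  have h := MemLp.smul (p := 2) (q := 2) (r := 1) hg hf
  rw [memLp_one_iff_integrable] at h
  exact h

omit [IsProbabilityMeasure (volume : Measure Ω)] in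
lemma memL2_conj {f : Ω → ℂ} (hf : MemLp f 2 volume) :
    MemLp (fun ω => (starRingEnd ℂ) (f ω)) 2 volume := by
  refine hf.of_le_mul (c := 1)
    (Complex.continuous_conj.comp_aestronglyMeasurable hf.1) ?_
  filter_upwards with ω
  simp

lemma indep_integral_mul {X Y : Ω → ℂ} (h : IndepFun X Y volume)
    (hX : Integrable X volume) (hY : Integrable Y volume) :
    ∫ ω, X ω * Y ω = (∫ ω, X ω) * ∫ ω, Y ω := by
  have hXY : Integrable (fun ω => X ω * Y ω) volume := h.integrable_mul hX hY
  have hre : ∀ {W : Ω → ℂ}, Integrable W volume → Integrable (fun ω => (W ω).re) volume := by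
    intro W hW; simpa using hW.re
  have him : ∀ {W : Ω → ℂ}, Integrable W volume → Integrable (fun ω => (W ω).im) volume := by
    intro W hW; simpa using hW.im
  have hIre : ∀ {W : Ω → ℂ}, Integrable W volume → (∫ ω, (W ω).re) = (∫ ω, W ω).re := by
    intro W hW; simpa using integral_re (μ := (volume : Measure Ω)) hW
  have hIim : ∀ {W : Ω → ℂ}, Integrable W volume → (∫ ω, (W ω).im) = (∫ ω, W ω).im := by
    intro W hW; simpa using integral_im (μ := (volume : Measure Ω)) hW
  have hac : IndepFun (fun ω => (X ω).re) (fun ω => (Y ω).re) volume :=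
    h.comp Complex.measurable_re Complex.measurable_re
  have had : IndepFun (fun ω => (X ω).re) (fun ω => (Y ω).im) volume :=
    h.comp Complex.measurable_re Complex.measurable_im
  have hbc : IndepFun (fun ω => (X ω).im) (fun ω => (Y ω).re) volume :=
    h.comp Complex.measurable_im Complex.measurable_re
  have hbd : IndepFun (fun ω => (X ω).im) (fun ω => (Y ω).im) volume :=
    h.comp Complex.measurable_im Complex.measurable_im
  have peq : ∀ (f g : Ω → ℝ), ((fun ω => f ω) * fun ω => g ω) = fun ω => f ω * g ω :=
    fun _ _ => rfl
  have eac : (∫ ω, (X ω).re * (Y ω).re) = (∫ ω, (X ω).re) * ∫ ω, (Y ω).re := by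
    have := hac.integral_fun_mul_eq_mul_integral (hre hX).1 (hre hY).1; exact this
  have ead : (∫ ω, (X ω).re * (Y ω).im) = (∫ ω, (X ω).re) * ∫ ω, (Y ω).im := by
    have := had.integral_fun_mul_eq_mul_integral (hre hX).1 (him hY).1; exact this
  have ebc : (∫ ω, (X ω).im * (Y ω).re) = (∫ ω, (X ω).im) * ∫ ω, (Y ω).re := by
    have := hbc.integral_fun_mul_eq_mul_integral (him hX).1 (hre hY).1; exact this
  have ebd : (∫ ω, (X ω).im * (Y ω).im) = (∫ ω, (X ω).im) * ∫ ω, (Y ω).im := by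
    have := hbd.integral_fun_mul_eq_mul_integral (him hX).1 (him hY).1; exact this
  have iac : Integrable (fun ω => (X ω).re * (Y ω).re) volume :=
    hac.integrable_mul (hre hX) (hre hY)
  have iad : Integrable (fun ω => (X ω).re * (Y ω).im) volume :=
    had.integrable_mul (hre hX) (him hY)
  have ibc : Integrable (fun ω => (X ω).im * (Y ω).re) volume :=
    hbc.integrable_mul (him hX) (hre hY)
  have ibd : Integrable (fun ω => (X ω).im * (Y ω).im) volume :=
    hbd.integrable_mul (him hX) (him hY)
  apply Complex.ext
  · rw [← hIre hXY, Complex.mul_re, ← hIre hX, ← hIre hY, ← hIim hX, ← hIim hY,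
      ← eac, ← ebd]
    rw [show (fun ω => (X ω * Y ω).re)
        = fun ω => (X ω).re * (Y ω).re - (X ω).im * (Y ω).im by
      funext ω; simp [Complex.mul_re]]
    exact integral_sub iac ibd
  · rw [← hIim hXY, Complex.mul_im, ← hIre hX, ← hIre hY, ← hIim hX, ← hIim hY,
      ← ead, ← ebc]
    rw [show (fun ω => (X ω * Y ω).im)
        = fun ω => (X ω).re * (Y ω).im + (X ω).im * (Y ω).re by
      funext ω; simp [Complex.mul_im]]
    exact integral_add iad ibc

omit [IsProbabilityMeasure (volume : Measure Ω)] in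
lemma unif_aemeasurable (φ : Ω → ℝ)
    (hφU : Measure.map φ volume
      = (ENNReal.ofReal (2 * Real.pi))⁻¹ • (volume.restrict (Set.Icc (-Real.pi) Real.pi))) :
    AEMeasurable φ (volume : Measure Ω) := by
  by_contra h
  rw [Measure.map_of_not_aemeasurable h] at hφU
  have h0 := congrArg (fun μ : Measure ℝ => μ Set.univ) hφU
  simp only [Measure.coe_zero, Pi.zero_apply, Measure.smul_apply, smul_eq_mul,
    Measure.restrict_apply_univ] at h0
  rw [Real.volume_Icc] at h0
  have hpi : (0:ℝ) < 2 * Real.pi := by positivity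
  have h2 : Real.pi - -Real.pi = 2 * Real.pi := by ring
  rw [h2] at h0
  rw [ENNReal.inv_mul_cancel (by simp [hpi, Real.pi_pos]) ENNReal.ofReal_ne_top] at h0
  exact one_ne_zero h0.symm

omit [IsProbabilityMeasure (volume : Measure Ω)] in
lemma integral_exp_unif (φ : Ω → ℝ)
    (hφU : Measure.map φ volume
      = (ENNReal.ofReal (2 * Real.pi))⁻¹ • (volume.restrict (Set.Icc (-Real.pi) Real.pi)))
    (c : ℂ) (hc : c ≠ 0)
    (he : Complex.exp (c * Real.pi) = Complex.exp (c * (-Real.pi : ℝ))) :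
    ∫ ω, Complex.exp (c * (φ ω : ℂ)) = 0 := by
  have hφm : AEMeasurable φ (volume : Measure Ω) := unif_aemeasurable φ hφU
  have hcont : Continuous fun t : ℝ => Complex.exp (c * (t : ℂ)) :=
    Complex.continuous_exp.comp (continuous_const.mul Complex.continuous_ofReal)
  have h1 : ∫ ω, Complex.exp (c * (φ ω : ℂ))
      = ∫ t, Complex.exp (c * (t : ℂ)) ∂(Measure.map φ volume) :=
    (integral_map hφm hcont.aestronglyMeasurable).symm
  rw [h1, hφU, integral_smul_measure]
  have h2 : ∫ t in Set.Icc (-Real.pi) Real.pi, Complex.exp (c * (t : ℂ))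
      = ∫ t in (-Real.pi)..Real.pi, Complex.exp (c * (t : ℂ)) := by
    rw [intervalIntegral.integral_of_le (by linarith [Real.pi_pos]),
      integral_Icc_eq_integral_Ioc]
  rw [h2, integral_exp_mul_complex hc]
  push_cast at he ⊢
  rw [he]
  simp

end Helpers

/-- Equation (32) in Appendix B of the paper: for two pilot-sharing UEs `k ≠ i` with
independent uniform phases on `[−π, π]`,
`E[ô_iᴴ ô_k] = √(p̂_k p̂_i) τ_p tr (R_k Ψ⁻¹ R_i)`. -/
theorem cross_correlation_of_estimates
    {Ω S : Type*} [MeasureSpace Ω] [IsProbabilityMeasure (volume : Measure Ω)] [Fintype S]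
    (L : ℕ) (hL : 1 ≤ L)
    (τp σ2 : ℝ) (hτp : 0 < τp) (hσ2 : 0 < σ2)
    (phat : S → ℝ) (hphat : ∀ i, 0 < phat i)
    -- deterministic LoS parts and Hermitian covariance matrices
    (obar : S → Fin L → ℂ)
    (R : S → Matrix (Fin L) (Fin L) ℂ) (hR : ∀ i, (R i).IsHermitian)
    -- zero-mean square-integrable NLoS channel parts with covariance `R i`
    (otil : S → Ω → Fin L → ℂ)
    (hotil2 : ∀ i l, MemLp (fun ω => otil i ω l) 2 volume)
    (hotil0 : ∀ i l, (∫ ω, otil i ω l) = 0)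
    (hotilR : ∀ i, matExp (fun ω => outer (otil i ω) (otil i ω)) = R i)
    -- random phases
    (φ : S → Ω → ℝ)
    -- zero-mean square-integrable noise with covariance `τp σ2 I`
    (n : Ω → Fin L → ℂ)
    (hn2 : ∀ l, MemLp (fun ω => n ω l) 2 volume)
    (hn0 : ∀ l, (∫ ω, n ω l) = 0)
    (hnR : matExp (fun ω => outer (n ω) (n ω))
      = ((τp * σ2 : ℝ) : ℂ) • (1 : Matrix (Fin L) (Fin L) ℂ))
    -- the family {õ_i : i ∈ S} ∪ {n} is mutually independent
    (hindep : iIndepFun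
      (fun j : Option S => fun ω => j.elim (n ω) (fun i => otil i ω)) volume)
    -- the tuple (φ_i)_{i ∈ S} is independent of all the õ_i and n
    (hφindep : IndepFun (fun ω => fun i : S => φ i ω)
      (fun ω => fun j : Option S => j.elim (n ω) (fun i => otil i ω)) volume)
    -- received pilot signal and its mean
    (y ybar : Ω → Fin L → ℂ)
    (hy : y = fun ω => (∑ i, ((Real.sqrt (phat i) * τp : ℝ) : ℂ) •
        (Complex.exp ((φ i ω : ℂ) * Complex.I) • obar i + otil i ω)) + n ω)
    (hybar : ybar = fun ω => ∑ i, ((Real.sqrt (phat i) * τp : ℝ) : ℂ) •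
        (Complex.exp ((φ i ω : ℂ) * Complex.I) • obar i))
    -- the matrix Ψ, assumed invertible
    (Ψ : Matrix (Fin L) (Fin L) ℂ)
    (hΨ : Ψ = (∑ i, ((phat i * τp : ℝ) : ℂ) • R i) + (σ2 : ℂ) • 1)
    (hΨunit : IsUnit Ψ)
    (k : S)
    -- the phase-aware MMSE channel estimate of UE k
    (ohat : Ω → Fin L → ℂ)
    (hohat : ohat = fun ω => Complex.exp ((φ k ω : ℂ) * Complex.I) • obar k
        + ((Real.sqrt (phat k) : ℝ) : ℂ) • ((R k * Ψ⁻¹) *ᵥ (y ω - ybar ω)))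
    (i : S) (hki : k ≠ i)
    -- φ_k and φ_i are independent of each other and uniformly distributed on [−π, π]
    (hφki : IndepFun (φ k) (φ i) volume)
    (hφkU : Measure.map (φ k) volume
      = (ENNReal.ofReal (2 * Real.pi))⁻¹ • (volume.restrict (Set.Icc (-Real.pi) Real.pi)))
    (hφiU : Measure.map (φ i) volume
      = (ENNReal.ofReal (2 * Real.pi))⁻¹ • (volume.restrict (Set.Icc (-Real.pi) Real.pi)))
    -- the phase-aware MMSE channel estimate of UE i
    (ohati : Ω → Fin L → ℂ)
    (hohati : ohati = fun ω => Complex.exp ((φ i ω : ℂ) * Complex.I) • obar i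
        + ((Real.sqrt (phat i) : ℝ) : ℂ) • ((R i * Ψ⁻¹) *ᵥ (y ω - ybar ω))) :
    (∫ ω, star (ohati ω) ⬝ᵥ ohat ω)
      = ((Real.sqrt (phat k * phat i) * τp : ℝ) : ℂ) * (R k * Ψ⁻¹ * R i).trace := by
  classical
  have hφim : AEMeasurable (φ i) (volume : Measure Ω) := unif_aemeasurable _ hφiU
  have hφkm : AEMeasurable (φ k) (volume : Measure Ω) := unif_aemeasurable _ hφkU
  set c : S → ℂ := fun j => ((Real.sqrt (phat j) * τp : ℝ) : ℂ) with hcdef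
  set v : Ω → Fin L → ℂ := fun ω l => (∑ j, c j * otil j ω l) + n ω l with hvdef
  set Bi : Matrix (Fin L) (Fin L) ℂ := R i * Ψ⁻¹ with hBidef
  set Bk : Matrix (Fin L) (Fin L) ℂ := R k * Ψ⁻¹ with hBkdef
  set Ei : Ω → ℂ := fun ω => Complex.exp ((φ i ω : ℂ) * Complex.I) with hEidef
  set Ek : Ω → ℂ := fun ω => Complex.exp ((φ k ω : ℂ) * Complex.I) with hEkdef
  set cEi : Ω → ℂ := fun ω => (starRingEnd ℂ) (Ei ω) with hcEidef
  set ai : ℂ := ((Real.sqrt (phat i) : ℝ) : ℂ) with haidef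
  set ak : ℂ := ((Real.sqrt (phat k) : ℝ) : ℂ) with hakdef
  -- y - ybar = v
  have hyv : ∀ ω, y ω - ybar ω = v ω := by
    intro ω; funext l
    simp only [hy, hybar, hvdef, Pi.sub_apply, Pi.add_apply, Finset.sum_apply,
      Pi.smul_apply, smul_eq_mul, mul_add]
    rw [show ∀ (A B x : ℂ), (A + x) - B = (A - B) + x from fun A B x => by ring,
      ← Finset.sum_sub_distrib]
    congr 1
    exact Finset.sum_congr rfl fun j _ => by rw [hcdef]; ring
  -- L² and integrability facts for v
  have hv2 : ∀ m, MemLp (fun ω => v ω m) 2 volume := by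
    intro m
    have hsum : MemLp (fun ω => ∑ j, c j * otil j ω m) 2 volume :=
      memLp_finsetSum Finset.univ (fun j _ => (hotil2 j m).const_mul (c j))
    exact hsum.add (hn2 m)
  have hvI : ∀ m, Integrable (fun ω => v ω m) volume :=
    fun m => (hv2 m).integrable one_le_two
  -- boundedness and measurability of the phase factors
  have hnormE : ∀ t : ℝ, ‖Complex.exp ((t:ℂ) * Complex.I)‖ = 1 := by
    intro t; rw [Complex.norm_exp]; simp [Complex.mul_re]
  have hEkaesm : AEStronglyMeasurable Ek (volume : Measure Ω) :=
    ((Complex.continuous_exp.comp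
      (Complex.continuous_ofReal.mul continuous_const)).measurable.comp_aemeasurable
        hφkm).aestronglyMeasurable
  have hcEiaesm : AEStronglyMeasurable cEi (volume : Measure Ω) :=
    ((Complex.continuous_conj.comp (Complex.continuous_exp.comp
      (Complex.continuous_ofReal.mul continuous_const))).measurable.comp_aemeasurable
        hφim).aestronglyMeasurable
  have hEkbd : ∀ ω, ‖Ek ω‖ ≤ 1 := fun ω => le_of_eq (hnormE _)
  have hcEibd : ∀ ω, ‖cEi ω‖ ≤ 1 := by
    intro ω
    have h1 : ‖cEi ω‖ = ‖Ei ω‖ := norm_star _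
    rw [h1, hEidef]; exact le_of_eq (hnormE _)
  have hEkInt : Integrable Ek volume :=
    (integrable_const (1:ℝ)).mono' hEkaesm (Filter.Eventually.of_forall hEkbd)
  have hcEiInt : Integrable cEi volume :=
    (integrable_const (1:ℝ)).mono' hcEiaesm (Filter.Eventually.of_forall hcEibd)
  -- mean of phase factors is zero
  have hcEi0 : ∫ ω, cEi ω = 0 := by
    have hrw : ∀ ω, cEi ω = Complex.exp ((-Complex.I) * ((φ i ω : ℝ) : ℂ)) := by
      intro ω
      show (starRingEnd ℂ) (Complex.exp ((φ i ω : ℂ) * Complex.I)) = _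
      rw [← Complex.exp_conj]
      congr 1
      simp [Complex.conj_ofReal]
      ring
    calc ∫ ω, cEi ω = ∫ ω, Complex.exp ((-Complex.I) * ((φ i ω : ℝ) : ℂ)) := by
          simp_rw [hrw]
      _ = 0 := by
          apply integral_exp_unif (φ i) hφiU (-Complex.I) (by simp [Complex.I_ne_zero])
          rw [show (-Complex.I) * ((Real.pi : ℝ) : ℂ) = -((Real.pi:ℂ) * Complex.I) by ring,
            Complex.exp_neg, Complex.exp_pi_mul_I]
          push_cast
          rw [show -Complex.I * -(Real.pi:ℂ) = (Real.pi:ℂ) * Complex.I by ring,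
            Complex.exp_pi_mul_I]
          norm_num
  have hEk0 : ∫ ω, Ek ω = 0 := by
    have hrw : ∀ ω, Ek ω = Complex.exp (Complex.I * ((φ k ω : ℝ) : ℂ)) := by
      intro ω
      show Complex.exp ((φ k ω : ℂ) * Complex.I) = _
      rw [mul_comm]
    calc ∫ ω, Ek ω = ∫ ω, Complex.exp (Complex.I * ((φ k ω : ℝ) : ℂ)) := by
          simp_rw [hrw]
      _ = 0 := by
          apply integral_exp_unif (φ k) hφkU Complex.I Complex.I_ne_zero
          push_cast
          rw [show Complex.I * (Real.pi:ℂ) = (Real.pi:ℂ) * Complex.I by ring,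
            Complex.exp_pi_mul_I,
            show Complex.I * -(Real.pi:ℂ) = -((Real.pi:ℂ) * Complex.I) by ring,
            Complex.exp_neg, Complex.exp_pi_mul_I]
          norm_num
  -- independence of phase factors and v
  have hX10 : ∫ ω, cEi ω * Ek ω = 0 := by
    have hFk : Measurable fun t : ℝ => Complex.exp ((t:ℂ) * Complex.I) :=
      (Complex.continuous_exp.comp
        (Complex.continuous_ofReal.mul continuous_const)).measurable
    have hFi : Measurable fun t : ℝ => (starRingEnd ℂ) (Complex.exp ((t:ℂ) * Complex.I)) :=
      (Complex.continuous_conj.comp (Complex.continuous_exp.comp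
        (Complex.continuous_ofReal.mul continuous_const))).measurable
    have hind : IndepFun cEi Ek volume := (hφki.comp hFk hFi).symm
    rw [indep_integral_mul hind hcEiInt hEkInt, hcEi0, zero_mul]
  have hGm : ∀ m : Fin L, Measurable fun z : Option S → Fin L → ℂ =>
      (∑ j, c j * z (some j) m) + z none m := by
    intro m
    apply Measurable.add
    · apply Finset.measurable_sum
      intro j _
      have hz : Measurable fun z : Option S → Fin L → ℂ => z (some j) m := by
        exact (measurable_pi_apply m).comp (measurable_pi_apply (some j))
      exact hz.const_mul (c j)
    · exact (measurable_pi_apply m).comp (measurable_pi_apply none)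
  have hker2 : ∀ m, ∫ ω, cEi ω * v ω m = 0 := by
    intro m
    have hFi' : Measurable fun t : S → ℝ =>
        (starRingEnd ℂ) (Complex.exp (((t i : ℝ):ℂ) * Complex.I)) :=
      ((Complex.continuous_conj.comp (Complex.continuous_exp.comp
        (Complex.continuous_ofReal.mul continuous_const))).measurable).comp
          (measurable_pi_apply i)
    have hind : IndepFun cEi (fun ω => v ω m) volume := hφindep.comp hFi' (hGm m)
    rw [indep_integral_mul hind hcEiInt (hvI m), hcEi0, zero_mul]
  have hker3 : ∀ m, ∫ ω, Ek ω * (starRingEnd ℂ) (v ω m) = 0 := by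
    intro m
    have hFk' : Measurable fun t : S → ℝ => Complex.exp (((t k : ℝ):ℂ) * Complex.I) :=
      ((Complex.continuous_exp.comp
        (Complex.continuous_ofReal.mul continuous_const)).measurable).comp
          (measurable_pi_apply k)
    have hGm' : Measurable fun z : Option S → Fin L → ℂ =>
        (starRingEnd ℂ) ((∑ j, c j * z (some j) m) + z none m) :=
      Complex.continuous_conj.measurable.comp (hGm m)
    have hind : IndepFun Ek (fun ω => (starRingEnd ℂ) (v ω m)) volume :=
      hφindep.comp hFk' hGm'
    rw [indep_integral_mul hind hEkInt ((memL2_conj (hv2 m)).integrable one_le_two),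
      hEk0, zero_mul]
  -- covariance of v
  have hcov : ∀ l m, ∫ ω, v ω l * (starRingEnd ℂ) (v ω m) = (τp:ℂ) * Ψ l m := by
    intro l m
    have iOO : ∀ j j' : S,
        Integrable (fun ω => otil j ω l * (starRingEnd ℂ) (otil j' ω m)) volume :=
      fun j j' => l2mul (hotil2 j l) (memL2_conj (hotil2 j' m))
    have iON : ∀ j : S, Integrable (fun ω => otil j ω l * (starRingEnd ℂ) (n ω m)) volume :=
      fun j => l2mul (hotil2 j l) (memL2_conj (hn2 m))
    have iNO : ∀ j : S, Integrable (fun ω => n ω l * (starRingEnd ℂ) (otil j ω m)) volume :=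
      fun j => l2mul (hn2 l) (memL2_conj (hotil2 j m))
    have iNN : Integrable (fun ω => n ω l * (starRingEnd ℂ) (n ω m)) volume :=
      l2mul (hn2 l) (memL2_conj (hn2 m))
    have vOOdiag : ∀ j : S, ∫ ω, otil j ω l * (starRingEnd ℂ) (otil j ω m) = R j l m := by
      intro j
      calc ∫ ω, otil j ω l * (starRingEnd ℂ) (otil j ω m)
          = matExp (fun ω => outer (otil j ω) (otil j ω)) l m := rfl
        _ = R j l m := by rw [hotilR j]
    have vOOoff : ∀ j j' : S, j ≠ j' →
        ∫ ω, otil j ω l * (starRingEnd ℂ) (otil j' ω m) = 0 := by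
      intro j j' hjj'
      have hind : IndepFun (fun ω => otil j ω l)
          (fun ω => (starRingEnd ℂ) (otil j' ω m)) volume :=
        (hindep.indepFun (show (some j : Option S) ≠ some j' by simpa using hjj')).comp
          (measurable_pi_apply l)
          (Complex.continuous_conj.measurable.comp (measurable_pi_apply m))
      rw [indep_integral_mul hind ((hotil2 j l).integrable one_le_two)
        ((memL2_conj (hotil2 j' m)).integrable one_le_two), hotil0 j l, zero_mul]
    have vON : ∀ j : S, ∫ ω, otil j ω l * (starRingEnd ℂ) (n ω m) = 0 := by
      intro j
      have hind : IndepFun (fun ω => otil j ω l)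
          (fun ω => (starRingEnd ℂ) (n ω m)) volume :=
        (hindep.indepFun (show (some j : Option S) ≠ none by simp)).comp
          (measurable_pi_apply l)
          (Complex.continuous_conj.measurable.comp (measurable_pi_apply m))
      rw [indep_integral_mul hind ((hotil2 j l).integrable one_le_two)
        ((memL2_conj (hn2 m)).integrable one_le_two), hotil0 j l, zero_mul]
    have vNO : ∀ j : S, ∫ ω, n ω l * (starRingEnd ℂ) (otil j ω m) = 0 := by
      intro j
      have hind : IndepFun (fun ω => n ω l)
          (fun ω => (starRingEnd ℂ) (otil j ω m)) volume :=
        (hindep.indepFun (show (none : Option S) ≠ some j by simp)).comp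
          (measurable_pi_apply l)
          (Complex.continuous_conj.measurable.comp (measurable_pi_apply m))
      rw [indep_integral_mul hind ((hn2 l).integrable one_le_two)
        ((memL2_conj (hotil2 j m)).integrable one_le_two), hn0 l, zero_mul]
    have vNN : ∫ ω, n ω l * (starRingEnd ℂ) (n ω m)
        = ((τp * σ2 : ℝ):ℂ) * (1 : Matrix (Fin L) (Fin L) ℂ) l m := by
      calc ∫ ω, n ω l * (starRingEnd ℂ) (n ω m)
          = matExp (fun ω => outer (n ω) (n ω)) l m := rfl
        _ = (((τp * σ2 : ℝ):ℂ) • (1 : Matrix (Fin L) (Fin L) ℂ)) l m := by rw [hnR]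
        _ = ((τp * σ2 : ℝ):ℂ) * (1 : Matrix (Fin L) (Fin L) ℂ) l m := rfl
    have hconj : ∀ ω, (starRingEnd ℂ) (v ω m)
        = (∑ j, c j * (starRingEnd ℂ) (otil j ω m)) + (starRingEnd ℂ) (n ω m) := by
      intro ω
      show (starRingEnd ℂ) ((∑ j, c j * otil j ω m) + n ω m) = _
      rw [map_add, map_sum]
      congr 1
      refine Finset.sum_congr rfl fun j _ => ?_
      simp [hcdef, Complex.conj_ofReal]
    have hsplit : ∀ ω, v ω l * (starRingEnd ℂ) (v ω m) =
        ((∑ j, ∑ j', (c j * c j') * (otil j ω l * (starRingEnd ℂ) (otil j' ω m)))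
          + (∑ j, c j * (otil j ω l * (starRingEnd ℂ) (n ω m))))
      + ((∑ j, c j * (n ω l * (starRingEnd ℂ) (otil j ω m)))
          + n ω l * (starRingEnd ℂ) (n ω m)) := by
      intro ω
      rw [hconj ω]
      show ((∑ j, c j * otil j ω l) + n ω l) * _ = _
      rw [add_mul, mul_add, mul_add, Finset.sum_mul_sum, Finset.sum_mul, Finset.mul_sum]
      refine congrArg₂ (· + ·) (congrArg₂ (· + ·) ?_ ?_) (congrArg₂ (· + ·) ?_ rfl)
      · exact Finset.sum_congr rfl fun j _ => Finset.sum_congr rfl fun j' _ => by ring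
      · exact Finset.sum_congr rfl fun j _ => by ring
      · exact Finset.sum_congr rfl fun j _ => by ring
    have iT1 : Integrable (fun ω => ∑ j, ∑ j',
        (c j * c j') * (otil j ω l * (starRingEnd ℂ) (otil j' ω m))) volume :=
      integrable_finset_sum _ fun j _ =>
        integrable_finset_sum _ fun j' _ => (iOO j j').const_mul _
    have iT2 : Integrable (fun ω => ∑ j,
        c j * (otil j ω l * (starRingEnd ℂ) (n ω m))) volume :=
      integrable_finset_sum _ fun j _ => (iON j).const_mul _
    have iT3 : Integrable (fun ω => ∑ j,
        c j * (n ω l * (starRingEnd ℂ) (otil j ω m))) volume :=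
      integrable_finset_sum _ fun j _ => (iNO j).const_mul _
    have hinner : ∀ j : S, ∫ ω, ∑ j',
        (c j * c j') * (otil j ω l * (starRingEnd ℂ) (otil j' ω m))
        = (c j * c j) * R j l m := by
      intro j
      rw [integral_finset_sum _ (fun j' _ => (iOO j j').const_mul _)]
      simp_rw [integral_const_mul]
      rw [Finset.sum_eq_single j]
      · rw [vOOdiag j]
      · intro b _ hb
        rw [vOOoff j b (Ne.symm hb), mul_zero]
      · intro h; exact absurd (Finset.mem_univ j) h
    have iT12 : Integrable (fun ω =>
        (∑ j, ∑ j', (c j * c j') * (otil j ω l * (starRingEnd ℂ) (otil j' ω m)))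
          + (∑ j, c j * (otil j ω l * (starRingEnd ℂ) (n ω m)))) volume := iT1.add iT2
    have iT34 : Integrable (fun ω =>
        (∑ j, c j * (n ω l * (starRingEnd ℂ) (otil j ω m)))
          + n ω l * (starRingEnd ℂ) (n ω m)) volume := iT3.add iNN
    simp only [hsplit]
    rw [integral_add iT12 iT34, integral_add iT1 iT2,
      integral_add iT3 iNN,
      integral_finset_sum _ (fun j _ => integrable_finset_sum _
        fun j' _ => (iOO j j').const_mul _),
      integral_finset_sum _ (fun j _ => (iON j).const_mul _),
      integral_finset_sum _ (fun j _ => (iNO j).const_mul _)]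
    simp only [hinner, integral_const_mul, vON, vNO, mul_zero,
      Finset.sum_const_zero, add_zero, zero_add, vNN]
    rw [hΨ]
    simp only [Matrix.add_apply, Matrix.sum_apply, Matrix.smul_apply, smul_eq_mul]
    rw [mul_add, Finset.mul_sum]
    congr 1
    · refine Finset.sum_congr rfl fun j _ => ?_
      have hcc : c j * c j = ((phat j * τp * τp : ℝ) : ℂ) := by
        rw [hcdef]
        show (((Real.sqrt (phat j) * τp : ℝ):ℂ)) * (((Real.sqrt (phat j) * τp : ℝ):ℂ)) = _
        rw [← Complex.ofReal_mul]
        congr 1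
        rw [show (Real.sqrt (phat j) * τp) * (Real.sqrt (phat j) * τp)
            = (Real.sqrt (phat j) * Real.sqrt (phat j)) * (τp * τp) from by ring,
          Real.mul_self_sqrt (hphat j).le]
        ring
      rw [hcc]
      push_cast
      ring
    · push_cast
      ring
  -- second moment facts for u := Bi *ᵥ v and w := Bk *ᵥ v
  have hmulVec : ∀ (M : Matrix (Fin L) (Fin L) ℂ) (x : Fin L → ℂ) (l : Fin L),
      (M *ᵥ x) l = ∑ m, M l m * x m := fun M x l => rfl
  have hw2 : ∀ l, MemLp (fun ω => (Bk *ᵥ v ω) l) 2 volume := by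
    intro l
    have hrw : (fun ω => (Bk *ᵥ v ω) l) = fun ω => ∑ m, Bk l m * v ω m := by
      funext ω; exact hmulVec Bk (v ω) l
    rw [hrw]
    exact memLp_finsetSum _ fun m _ => (hv2 m).const_mul _
  have hu2 : ∀ l, MemLp (fun ω => (Bi *ᵥ v ω) l) 2 volume := by
    intro l
    have hrw : (fun ω => (Bi *ᵥ v ω) l) = fun ω => ∑ m, Bi l m * v ω m := by
      funext ω; exact hmulVec Bi (v ω) l
    rw [hrw]
    exact memLp_finsetSum _ fun m _ => (hv2 m).const_mul _
  -- pointwise decomposition of the integrand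
  have hdecomp : ∀ (l : Fin L) (ω : Ω), (starRingEnd ℂ) (ohati ω l) * ohat ω l =
      ((starRingEnd ℂ) (obar i l) * obar k l) * (cEi ω * Ek ω)
    + ((ak * (starRingEnd ℂ) (obar i l)) * (cEi ω * (Bk *ᵥ v ω) l)
    + ((ai * obar k l) * (Ek ω * (starRingEnd ℂ) ((Bi *ᵥ v ω) l))
    + (ai * ak) * ((starRingEnd ℂ) ((Bi *ᵥ v ω) l) * (Bk *ᵥ v ω) l))) := by
    intro l ω
    rw [hohati, hohat]
    simp only [Pi.add_apply, Pi.smul_apply, smul_eq_mul, hyv ω]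
    simp only [hcEidef, hEidef, hEkdef, haidef, hakdef]
    simp only [map_add, _root_.map_mul, Complex.conj_ofReal]
    ring
  -- the four integrals
  have hcEivI : ∀ m, Integrable (fun ω => cEi ω * v ω m) volume :=
    fun m => (hvI m).bdd_mul hcEiaesm (Filter.Eventually.of_forall hcEibd)
  have hEkcvI : ∀ m, Integrable (fun ω => Ek ω * (starRingEnd ℂ) (v ω m)) volume :=
    fun m => ((memL2_conj (hv2 m)).integrable one_le_two).bdd_mul hEkaesm (Filter.Eventually.of_forall hEkbd)
  have hI2 : ∀ l, ∫ ω, cEi ω * (Bk *ᵥ v ω) l = 0 := by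
    intro l
    have hrw : (fun ω => cEi ω * (Bk *ᵥ v ω) l)
        = fun ω => ∑ m, Bk l m * (cEi ω * v ω m) := by
      funext ω
      rw [hmulVec Bk (v ω) l, Finset.mul_sum]
      exact Finset.sum_congr rfl fun m _ => by ring
    rw [hrw, integral_finset_sum _ fun m _ => (hcEivI m).const_mul _]
    simp [integral_const_mul, hker2]
  have hI3 : ∀ l, ∫ ω, Ek ω * (starRingEnd ℂ) ((Bi *ᵥ v ω) l) = 0 := by
    intro l
    have hrw : (fun ω => Ek ω * (starRingEnd ℂ) ((Bi *ᵥ v ω) l))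
        = fun ω => ∑ m, (starRingEnd ℂ) (Bi l m) * (Ek ω * (starRingEnd ℂ) (v ω m)) := by
      funext ω
      rw [hmulVec Bi (v ω) l, map_sum, Finset.mul_sum]
      exact Finset.sum_congr rfl fun m _ => by rw [_root_.map_mul]; ring
    rw [hrw, integral_finset_sum _ fun m _ => (hEkcvI m).const_mul _]
    simp [integral_const_mul, hker3]
  have hI4 : ∀ l, ∫ ω, (starRingEnd ℂ) ((Bi *ᵥ v ω) l) * (Bk *ᵥ v ω) l
      = (τp:ℂ) * ∑ m, ∑ m', ((starRingEnd ℂ) (Bi l m) * Bk l m') * Ψ m' m := by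
    intro l
    have hrw : (fun ω => (starRingEnd ℂ) ((Bi *ᵥ v ω) l) * (Bk *ᵥ v ω) l)
        = fun ω => ∑ m, ∑ m', ((starRingEnd ℂ) (Bi l m) * Bk l m')
            * (v ω m' * (starRingEnd ℂ) (v ω m)) := by
      funext ω
      rw [hmulVec Bi (v ω) l, hmulVec Bk (v ω) l, map_sum, Finset.sum_mul_sum]
      refine Finset.sum_congr rfl fun m _ => ?_
      refine Finset.sum_congr rfl fun m' _ => ?_
      rw [_root_.map_mul]
      ring
    rw [hrw, integral_finset_sum _ fun m _ => integrable_finset_sum _ fun m' _ =>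
      (l2mul (hv2 m') (memL2_conj (hv2 m))).const_mul _]
    have hIin : ∀ m, ∫ ω, ∑ m', ((starRingEnd ℂ) (Bi l m) * Bk l m')
        * (v ω m' * (starRingEnd ℂ) (v ω m))
        = ∑ m', ((starRingEnd ℂ) (Bi l m) * Bk l m') * ((τp:ℂ) * Ψ m' m) := by
      intro m
      rw [integral_finset_sum _ fun m' _ =>
        (l2mul (hv2 m') (memL2_conj (hv2 m))).const_mul _]
      exact Finset.sum_congr rfl fun m' _ => by rw [integral_const_mul, hcov m' m]
    simp only [hIin]
    rw [Finset.mul_sum]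
    refine Finset.sum_congr rfl fun m _ => ?_
    rw [Finset.mul_sum]
    exact Finset.sum_congr rfl fun m' _ => by ring
  -- integrability of the four pieces
  have hT1I : ∀ l : Fin L, Integrable (fun ω =>
      ((starRingEnd ℂ) (obar i l) * obar k l) * (cEi ω * Ek ω)) volume :=
    fun l => (hEkInt.bdd_mul hcEiaesm (Filter.Eventually.of_forall hcEibd)).const_mul _
  have hT2I : ∀ l : Fin L, Integrable (fun ω =>
      (ak * (starRingEnd ℂ) (obar i l)) * (cEi ω * (Bk *ᵥ v ω) l)) volume :=
    fun l => (((hw2 l).integrable one_le_two).bdd_mul hcEiaesm (Filter.Eventually.of_forall hcEibd)).const_mul _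
  have hT3I : ∀ l : Fin L, Integrable (fun ω =>
      (ai * obar k l) * (Ek ω * (starRingEnd ℂ) ((Bi *ᵥ v ω) l))) volume :=
    fun l => (((memL2_conj (hu2 l)).integrable one_le_two).bdd_mul
      hEkaesm (Filter.Eventually.of_forall hEkbd)).const_mul _
  have hT4I : ∀ l : Fin L, Integrable (fun ω =>
      (ai * ak) * ((starRingEnd ℂ) ((Bi *ᵥ v ω) l) * (Bk *ᵥ v ω) l)) volume :=
    fun l => (l2mul (memL2_conj (hu2 l)) (hw2 l)).const_mul _
  -- per-coordinate value
  have hIl : ∀ l, ∫ ω, (starRingEnd ℂ) (ohati ω l) * ohat ω l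
      = (ai * ak) * ((τp:ℂ) * ∑ m, ∑ m',
          ((starRingEnd ℂ) (Bi l m) * Bk l m') * Ψ m' m) := by
    intro l
    have i34 : Integrable (fun ω =>
        (ai * obar k l) * (Ek ω * (starRingEnd ℂ) ((Bi *ᵥ v ω) l))
        + (ai * ak) * ((starRingEnd ℂ) ((Bi *ᵥ v ω) l) * (Bk *ᵥ v ω) l)) volume :=
      (hT3I l).add (hT4I l)
    have i234 : Integrable (fun ω =>
        (ak * (starRingEnd ℂ) (obar i l)) * (cEi ω * (Bk *ᵥ v ω) l)
        + ((ai * obar k l) * (Ek ω * (starRingEnd ℂ) ((Bi *ᵥ v ω) l))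
        + (ai * ak) * ((starRingEnd ℂ) ((Bi *ᵥ v ω) l) * (Bk *ᵥ v ω) l))) volume :=
      (hT2I l).add i34
    simp only [hdecomp l]
    rw [integral_add (hT1I l) i234, integral_add (hT2I l) i34,
      integral_add (hT3I l) (hT4I l), integral_const_mul, integral_const_mul,
      integral_const_mul, integral_const_mul, hX10, hI2 l, hI3 l, hI4 l]
    ring
  -- trace identity
  have htr : ∑ l, ∑ m, ∑ m', ((starRingEnd ℂ) (Bi l m) * Bk l m') * Ψ m' m
      = (Biᴴ * (Bk * Ψ)).trace := by
    simp only [Matrix.trace, Matrix.diag, Matrix.mul_apply,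
      Matrix.conjTranspose_apply, RCLike.star_def]
    rw [Finset.sum_comm]
    refine Finset.sum_congr rfl fun l _ => ?_
    refine Finset.sum_congr rfl fun m _ => ?_
    rw [Finset.mul_sum]
    exact Finset.sum_congr rfl fun m' _ => by ring
  -- matrix algebra
  have hΨH : Ψ.IsHermitian := by
    rw [hΨ]
    apply Matrix.IsHermitian.add
    · show Matrix.conjTranspose _ = _
      rw [Matrix.conjTranspose_sum]
      refine Finset.sum_congr rfl fun j _ => ?_
      rw [Matrix.conjTranspose_smul, (hR j).eq]
      congr 1
      simp [Complex.conj_ofReal]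
    · show Matrix.conjTranspose _ = _
      rw [Matrix.conjTranspose_smul, Matrix.conjTranspose_one]
      congr 1
      simp [Complex.conj_ofReal]
  have hΨiH : (Ψ⁻¹).IsHermitian := hΨH.inv
  have hBiH : Biᴴ = Ψ⁻¹ * R i := by
    rw [hBidef, Matrix.conjTranspose_mul, (hR i).eq, hΨiH.eq]
  have hBkΨ : Bk * Ψ = R k := by
    rw [hBkdef, Matrix.mul_assoc,
      Matrix.nonsing_inv_mul Ψ ((Matrix.isUnit_iff_isUnit_det Ψ).mp hΨunit), Matrix.mul_one]
  -- assemble everything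
  have hdot : ∀ ω, star (ohati ω) ⬝ᵥ ohat ω
      = ∑ l, (starRingEnd ℂ) (ohati ω l) * ohat ω l := fun ω => rfl
  have hIlInt : ∀ l : Fin L,
      Integrable (fun ω => (starRingEnd ℂ) (ohati ω l) * ohat ω l) volume := by
    intro l
    have heq : (fun ω => (starRingEnd ℂ) (ohati ω l) * ohat ω l)
        = fun ω => ((starRingEnd ℂ) (obar i l) * obar k l) * (cEi ω * Ek ω)
          + ((ak * (starRingEnd ℂ) (obar i l)) * (cEi ω * (Bk *ᵥ v ω) l)
          + ((ai * obar k l) * (Ek ω * (starRingEnd ℂ) ((Bi *ᵥ v ω) l))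
          + (ai * ak) * ((starRingEnd ℂ) ((Bi *ᵥ v ω) l) * (Bk *ᵥ v ω) l))) :=
      funext fun ω => hdecomp l ω
    rw [heq]
    exact (hT1I l).add ((hT2I l).add ((hT3I l).add (hT4I l)))
  calc (∫ ω, star (ohati ω) ⬝ᵥ ohat ω)
      = ∫ ω, ∑ l, (starRingEnd ℂ) (ohati ω l) * ohat ω l := by simp only [hdot]
    _ = ∑ l, ∫ ω, (starRingEnd ℂ) (ohati ω l) * ohat ω l :=
        integral_finset_sum _ fun l _ => hIlInt l
    _ = ∑ l, (ai * ak) * ((τp:ℂ) * ∑ m, ∑ m',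
          ((starRingEnd ℂ) (Bi l m) * Bk l m') * Ψ m' m) :=
        Finset.sum_congr rfl fun l _ => hIl l
    _ = (ai * ak * (τp:ℂ)) * ∑ l, ∑ m, ∑ m',
          ((starRingEnd ℂ) (Bi l m) * Bk l m') * Ψ m' m := by
        rw [Finset.mul_sum]
        exact Finset.sum_congr rfl fun l _ => by ring
    _ = (ai * ak * (τp:ℂ)) * (Biᴴ * (Bk * Ψ)).trace := by rw [htr]
    _ = (ai * ak * (τp:ℂ)) * (R k * Ψ⁻¹ * R i).trace := by
        rw [hBiH, hBkΨ, Matrix.trace_mul_cycle]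
    _ = ((Real.sqrt (phat k * phat i) * τp : ℝ) : ℂ) * (R k * Ψ⁻¹ * R i).trace := by
        rw [haidef, hakdef, Real.sqrt_mul (hphat k).le]
        push_cast
        ring
end
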